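/- (Moore's theorem) In Moore's Nim with parameter k ≥ 2, a position is a P-position if and only if, writing each pile size in binary, the sum of the binary digits in each bit-position is divisible by k. Equivalently: for each bit i, the number of piles whose i-th binary digit is 1 is ≡ 0 (mod k). -/

import Mathlib

/-- A move in Moore's Nim with parameter `k`: choose at least one and at most
`k - 1` piles and strictly decrease each of them (removing a positive total
number of counters). `r` is the multiset of affected piles and `r'` the
multiset of their new (strictly smaller) sizes. -/
def MooreMove (k : ℕ) (s t : Multiset ℕ) : Prop :=
  ∃ r r' : Multiset ℕ, r ≤ s ∧ r ≠ 0 ∧ Multiset.card r ≤ k - 1 ∧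
    Multiset.Rel (fun a b => b < a) r r' ∧ t = s - r + r'

mutual
/-- Previous-player win in Moore's Nim: every move leads to a next-player win. -/
inductive MooreP (k : ℕ) : Multiset ℕ → Prop
  | mk (s : Multiset ℕ) : (∀ t, MooreMove k s t → MooreN k t) → MooreP k s

/-- Next-player win in Moore's Nim: some move leads to a previous-player win. -/
inductive MooreN (k : ℕ) : Multiset ℕ → Prop
  | mk (s t : Multiset ℕ) : MooreMove k s t → MooreP k t → MooreN k s
end

/-- count of elements with bit `i` set -/
def cnt (i : ℕ) (m : Multiset ℕ) : ℕ :=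
  Multiset.card (m.filter (fun a => Nat.testBit a i))

lemma cnt_add (i : ℕ) (a b : Multiset ℕ) : cnt i (a + b) = cnt i a + cnt i b := by
  simp [cnt, Multiset.filter_add]

lemma cnt_le (i : ℕ) {a b : Multiset ℕ} (h : b ≤ a) : cnt i b ≤ cnt i a :=
  Multiset.card_le_card (Multiset.filter_le_filter _ h)

lemma cnt_sub (i : ℕ) {a b : Multiset ℕ} (h : b ≤ a) : cnt i (a - b) = cnt i a - cnt i b := by
  rw [cnt, cnt, cnt, Multiset.filter_sub, Multiset.card_sub (Multiset.filter_le_filter _ h)]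

lemma cnt_cons (i x : ℕ) (m : Multiset ℕ) :
    cnt i (x ::ₘ m) = (if Nat.testBit x i then 1 else 0) + cnt i m := by
  simp only [cnt, Multiset.filter_cons]
  split <;> simp [Nat.add_comm]

lemma cnt_coe_nil (i : ℕ) : cnt i (↑([] : List ℕ)) = 0 := rfl

lemma cnt_coe_cons (i x : ℕ) (l : List ℕ) :
    cnt i (↑(x :: l)) = (if Nat.testBit x i then 1 else 0) + cnt i ↑l := by
  rw [← Multiset.cons_coe, cnt_cons]

lemma cnt_coe_append (i : ℕ) (l₁ l₂ : List ℕ) :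
    cnt i (↑(l₁ ++ l₂)) = cnt i ↑l₁ + cnt i ↑l₂ := by
  rw [← cnt_add]; rfl

lemma cnt_eq_length (i : ℕ) {l : List ℕ} (h : ∀ a ∈ l, Nat.testBit a i = true) :
    cnt i ↑l = l.length := by
  induction l with
  | nil => rfl
  | cons x t ih =>
    rw [cnt_coe_cons, if_pos (h x (by simp)), ih (fun a ha => h a (by simp [ha]))]
    simp [Nat.add_comm]

lemma cnt_eq_zero (i : ℕ) {l : List ℕ} (h : ∀ a ∈ l, Nat.testBit a i = false) :
    cnt i ↑l = 0 := by
  induction l with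
  | nil => rfl
  | cons x t ih =>
    rw [cnt_coe_cons, if_neg (by simp [h x (by simp)]), ih (fun a ha => h a (by simp [ha]))]

lemma cnt_congr {l₁ l₂ : List ℕ} {i : ℕ}
    (h : List.Forall₂ (fun a b => Nat.testBit a i = Nat.testBit b i) l₁ l₂) :
    cnt i ↑l₁ = cnt i ↑l₂ := by
  induction h with
  | nil => rfl
  | cons hab _ ih => rw [cnt_coe_cons, cnt_coe_cons, hab, ih]

lemma rel_of_forall₂ {R : ℕ → ℕ → Prop} {l₁ l₂ : List ℕ} (h : List.Forall₂ R l₁ l₂) :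
    Multiset.Rel R ↑l₁ ↑l₂ := by
  induction h with
  | nil => exact Multiset.Rel.zero
  | cons hab _ ih => rw [← Multiset.cons_coe, ← Multiset.cons_coe]; exact Multiset.Rel.cons hab ih

lemma forall₂_map_pairs {E : List (ℕ × ℕ)} {R : ℕ → ℕ → Prop} (h : ∀ p ∈ E, R p.1 p.2) :
    List.Forall₂ R (E.map Prod.fst) (E.map Prod.snd) := by
  induction E with
  | nil => exact List.Forall₂.nil
  | cons p t ih =>
    exact List.Forall₂.cons (h p (by simp)) (ih (fun q hq => h q (by simp [hq])))

/-- bits at positions `≥ j` agree if the quotients by `2^j` agree -/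
lemma testBit_eq_of_div_eq {a b j : ℕ} (h : a / 2 ^ j = b / 2 ^ j) :
    ∀ i, j ≤ i → Nat.testBit a i = Nat.testBit b i := by
  intro i hij
  have h2 : (2:ℕ) ^ i = 2 ^ j * 2 ^ (i - j) := by
    rw [← pow_add]; congr 1; omega
  rw [Nat.testBit_eq_decide_div_mod_eq, Nat.testBit_eq_decide_div_mod_eq, h2, ← Nat.div_div_eq_div_mul,
    ← Nat.div_div_eq_div_mul, h]

lemma div_eq_of_slot {b w j : ℕ} (hb : b % 2 ^ j = 0) (h1 : b ≤ w) (h2 : w < b + 2 ^ j) :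
    w / 2 ^ j = b / 2 ^ j := by
  have hd : 2 ^ j * (b / 2 ^ j) = b := by
    conv_rhs => rw [← Nat.div_add_mod b (2^j)]
    omega
  have hd' : b / 2 ^ j * 2 ^ j = b := by rw [mul_comm]; exact hd
  apply Nat.div_eq_of_lt_le
  · omega
  · have : (b / 2 ^ j + 1) * 2 ^ j = b / 2 ^ j * 2 ^ j + 2 ^ j := by ring
    omega

lemma testBit_base (j q : ℕ) : Nat.testBit (2 ^ (j+1) * q) j = false := by
  rw [Nat.testBit_eq_decide_div_mod_eq]
  have : 2 ^ (j+1) * q / 2 ^ j = 2 * q := by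
    have h1 : 2 ^ (j+1) * q = 2 ^ j * (2 * q) := by ring
    rw [h1, Nat.mul_div_cancel_left _ (Nat.pow_pos (by norm_num))]
  simp [this, Nat.mul_mod_right]

lemma testBit_base' (j q : ℕ) : Nat.testBit (2 ^ (j+1) * q + 2 ^ j) j = true := by
  rw [Nat.testBit_eq_decide_div_mod_eq]
  have : (2 ^ (j+1) * q + 2 ^ j) / 2 ^ j = 2 * q + 1 := by
    have h1 : 2 ^ (j+1) * q + 2 ^ j = 2 ^ j * (2 * q) + 2 ^ j := by ring
    rw [h1, Nat.mul_add_div (Nat.pow_pos (by norm_num)),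
      Nat.div_self (Nat.pow_pos (by norm_num))]
  rw [this]
  simp [Nat.mul_add_mod]

/-- if bit `j` of `a` is set then `a`'s low part below `j+1` is at least `2^j` -/
lemma low_ge_of_testBit {a j : ℕ} (h : Nat.testBit a j = true) :
    2 ^ (j+1) * (a / 2 ^ (j+1)) + 2 ^ j ≤ a := by
  have hm : a % 2 ^ (j+1) ≥ 2 ^ j := by
    by_contra hc
    push_neg at hc
    have h1 : Nat.testBit (a % 2 ^ (j+1)) j = false := Nat.testBit_lt_two_pow hc
    rw [Nat.testBit_mod_two_pow] at h1
    simp [Nat.lt_succ_self, h] at h1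
  have := Nat.div_add_mod a (2 ^ (j+1))
  omega

/-- top differing bit of `b < a` -/
lemma exists_topbit {a b : ℕ} (h : b < a) :
    ∃ i, Nat.testBit a i = true ∧ Nat.testBit b i = false ∧
      ∀ j, i < j → Nat.testBit a j = Nat.testBit b j := by
  have hne : a ^^^ b ≠ 0 := by
    intro hc; have : a = b := by rw [← Nat.zero_xor b, ← hc, Nat.xor_assoc, Nat.xor_self, Nat.xor_zero]
    omega
  obtain ⟨i, hi, hhi⟩ := Nat.exists_most_significant_bit hne
  rw [Nat.testBit_xor] at hi
  have hup : ∀ j, i < j → Nat.testBit a j = Nat.testBit b j := by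
    intro j hj
    have hx := hhi j hj
    rw [Nat.testBit_xor] at hx
    revert hx
    cases Nat.testBit a j <;> cases Nat.testBit b j <;> simp
  rcases hb : Nat.testBit a i with _ | _
  · rw [hb] at hi
    simp at hi
    exact absurd (Nat.lt_of_testBit i hb hi (fun j hj => hup j hj)) (by omega)
  · rw [hb] at hi
    simp at hi
    exact ⟨i, hb, hi, hup⟩

/-- core of Lemma A: for a strictly-decreasing replacement there is a top bit
where the count strictly drops, by at most `card r`. -/
lemma rel_cnt {r r' : Multiset ℕ} (h : Multiset.Rel (fun a b => b < a) r r') (hne : r ≠ 0) :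
    ∃ i, cnt i r' < cnt i r ∧ cnt i r ≤ cnt i r' + Multiset.card r ∧
      ∀ j, i < j → cnt j r = cnt j r' := by
  induction h with
  | zero => exact absurd rfl hne
  | @cons a b as bs hab hrest ih =>
    by_cases has : as = 0
    · subst has
      have hbs : bs = 0 := Multiset.rel_zero_left.mp hrest
      subst hbs
      obtain ⟨i, hi1, hi2, hi3⟩ := exists_topbit hab
      refine ⟨i, ?_, ?_, ?_⟩
      · rw [cnt_cons, cnt_cons, hi1, hi2]
        simp
      · rw [cnt_cons, cnt_cons, hi1, hi2]
        simp
        omega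
      · intro j hj
        rw [cnt_cons, cnt_cons, hi3 j hj]
    · obtain ⟨i₁, h11, h12, h13⟩ := ih has
      obtain ⟨i₂, h21, h22, h23⟩ := exists_topbit hab
      have hcard : Multiset.card (a ::ₘ as) = Multiset.card as + 1 := by simp
      rcases Nat.lt_trichotomy i₁ i₂ with hlt | heq | hgt
      · refine ⟨i₂, ?_, ?_, ?_⟩
        · rw [cnt_cons, cnt_cons, h21, h22, h13 i₂ hlt]
          simp
        · rw [cnt_cons, cnt_cons, h21, h22, h13 i₂ hlt, hcard]
          simp
          omega
        · intro j hj
          rw [cnt_cons, cnt_cons, h23 j hj, h13 j (by omega)]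
      · subst heq
        refine ⟨i₁, ?_, ?_, ?_⟩
        · rw [cnt_cons, cnt_cons, h21, h22]
          simp
          omega
        · rw [cnt_cons, cnt_cons, h21, h22, hcard]
          simp
          omega
        · intro j hj
          rw [cnt_cons, cnt_cons, h23 j hj, h13 j hj]
      · refine ⟨i₁, ?_, ?_, ?_⟩
        · rw [cnt_cons, cnt_cons, h23 i₁ hgt]
          split <;> omega
        · rw [cnt_cons, cnt_cons, h23 i₁ hgt, hcard]
          split <;> omega
        · intro j hj
          rw [cnt_cons, cnt_cons, h23 j (by omega), h13 j hj]

/-- Lemma A: from a position with all bit-counts divisible by `k`, every move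
destroys the property. -/
lemma lemA {k : ℕ} (hk : 2 ≤ k) {s t : Multiset ℕ}
    (hs : ∀ i, cnt i s % k = 0) (hmv : MooreMove k s t) : ¬ (∀ i, cnt i t % k = 0) := by
  intro hgt
  obtain ⟨r, r', hrle, hrne, hcard, hrel, ht⟩ := hmv
  obtain ⟨i, h1, h2, -⟩ := rel_cnt hrel hrne
  have hR : cnt i r ≤ cnt i s := cnt_le i hrle
  have hts : cnt i t = cnt i s - cnt i r + cnt i r' := by
    rw [ht, cnt_add, cnt_sub i hrle]
  have hcr : Multiset.card r ≤ k - 1 := hcard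
  -- cnt i r ≡ cnt i r' mod k
  have hmod : cnt i r % k = cnt i r' % k := by
    have e1 : (cnt i t + cnt i r) % k = (cnt i s + cnt i r') % k := by
      congr 1
      omega
    have e2 := hgt i
    have e3 := hs i
    calc cnt i r % k = (cnt i t + cnt i r) % k := by
          rw [Nat.add_mod, e2]; simp [Nat.mod_mod_of_dvd]
      _ = (cnt i s + cnt i r') % k := e1
      _ = cnt i r' % k := by rw [Nat.add_mod, e3]; simp [Nat.mod_mod_of_dvd]
    -- nonsense fallback
  have hdvd : k ∣ cnt i r - cnt i r' := by
    exact (Nat.modEq_iff_dvd' (le_of_lt h1)).mp hmod.symm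
  have hpos : 0 < cnt i r - cnt i r' := by omega
  have := Nat.le_of_dvd hpos hdvd
  have hcr' : cnt i r - cnt i r' ≤ Multiset.card r := by omega
  omega

/-- moves strictly decrease the total sum -/
lemma rel_sum_lt {r r' : Multiset ℕ} (h : Multiset.Rel (fun a b => b < a) r r') :
    r'.sum ≤ r.sum ∧ (r ≠ 0 → r'.sum < r.sum) := by
  induction h with
  | zero => exact ⟨le_refl _, fun h => absurd rfl h⟩
  | @cons a b as bs hab _ ih =>
    rw [Multiset.sum_cons, Multiset.sum_cons]
    exact ⟨by omega, fun _ => by omega⟩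

lemma move_sum_lt {k : ℕ} {s t : Multiset ℕ} (hmv : MooreMove k s t) : t.sum < s.sum := by
  obtain ⟨r, r', hrle, hrne, _, hrel, ht⟩ := hmv
  obtain ⟨-, hlt⟩ := rel_sum_lt hrel
  have h1 : (s - r).sum + r.sum = s.sum := by
    rw [← Multiset.sum_add, tsub_add_cancel_of_le hrle]
  rw [ht, Multiset.sum_add]
  have := hlt hrne
  omega

lemma forall₂_append' {α β : Type*} {R : α → β → Prop} {l₁ l₂ : List α} {u₁ u₂ : List β}
    (h₁ : List.Forall₂ R l₁ u₁) (h₂ : List.Forall₂ R l₂ u₂) :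
    List.Forall₂ R (l₁ ++ l₂) (u₁ ++ u₂) := by
  induction h₁ with
  | nil => exact h₂
  | cons hab _ ih => exact List.Forall₂.cons hab ih

lemma forall₂_mem_right {α β : Type*} {R : α → β → Prop} {l₁ : List α} {l₂ : List β}
    (h : List.Forall₂ R l₁ l₂) : ∀ b ∈ l₂, ∃ a ∈ l₁, R a b := by
  induction h with
  | nil => intro b hb; simp at hb
  | cons hab _ ih =>
    intro b hb
    rcases List.mem_cons.mp hb with rfl | hb
    · exact ⟨_, by simp, hab⟩
    · obtain ⟨a, ha, hr⟩ := ih b hb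
      exact ⟨a, by simp [ha], hr⟩

lemma div_pow_succ (x j : ℕ) : x / 2 ^ (j + 1) = x / 2 ^ j / 2 := by
  rw [Nat.div_div_eq_div_mul, pow_succ]

lemma add_resid {k N : ℕ} (hk : 0 < k) : (N + (k - N % k) % k) % k = 0 := by
  have hmlt : N % k < k := Nat.mod_lt _ hk
  rcases Nat.eq_zero_or_pos (N % k) with h | h
  · rw [h, Nat.sub_zero, Nat.mod_self, Nat.add_zero, h]
  · have h1 : (k - N % k) % k = k - N % k := Nat.mod_eq_of_lt (by omega)
    have h2 : N % k + (k - N % k) = k := by omega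
    rw [h1, Nat.add_mod, h1, h2, Nat.mod_self]

lemma sub_mod_self {k N : ℕ} : (N - N % k) % k = 0 := by
  have := Nat.div_add_mod N k
  have h1 : N - N % k = k * (N / k) := by omega
  rw [h1]
  exact Nat.mul_mod_right _ _


lemma rep_of_mod {x j : ℕ} (h : x % 2 ^ (j+1) = 0) : x = 2 ^ (j+1) * (x / 2 ^ (j+1)) := by
  have := Nat.div_add_mod x (2 ^ (j+1))
  omega

lemma slot_bits {j : ℕ} {B : List (ℕ × ℕ)} {W : List ℕ}
    (hf : List.Forall₂ (fun p w => p.2 ≤ w ∧ w < p.2 + 2 ^ j) B W)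
    (hB : ∀ p ∈ B, p.2 % 2 ^ j = 0) :
    List.Forall₂ (fun (p : ℕ × ℕ) w => ∀ i, j ≤ i → Nat.testBit p.2 i = Nat.testBit w i) B W := by
  induction hf with
  | nil => constructor
  | @cons p w l₁ l₂ hpw _ ih =>
    refine List.Forall₂.cons ?_ (ih (fun q hq => hB q (by simp [hq])))
    intro i hij
    exact (testBit_eq_of_div_eq (div_eq_of_slot (hB p (by simp)) hpw.1 hpw.2) i hij).symm

/-- The key construction: given "slots" `B` (pairs of original pile value and a
base that is a multiple of `2^j`, with room `2^j` below the original), we can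
fill in the low `j` bits of the slots, possibly selecting additional piles from
`u` to reduce, so that all bit-counts below `j` become divisible by `k`. -/
lemma keyP {k : ℕ} (hk : 2 ≤ k) :
    ∀ j (u : Multiset ℕ) (B : List (ℕ × ℕ)),
      B ≠ [] → B.length ≤ k - 1 →
      (∀ p ∈ B, p.2 % 2 ^ j = 0 ∧ p.2 + 2 ^ j ≤ p.1) →
      ∃ (W : List ℕ) (E : List (ℕ × ℕ)),
        List.Forall₂ (fun p w => p.2 ≤ w ∧ w < p.2 + 2 ^ j) B W ∧
        (↑(E.map Prod.fst) : Multiset ℕ) ≤ u ∧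
        (∀ p ∈ E, p.2 < p.1 ∧ p.2 / 2 ^ j = p.1 / 2 ^ j) ∧
        B.length + E.length ≤ k - 1 ∧
        ∀ i, i < j →
          (cnt i (u - ↑(E.map Prod.fst)) + cnt i ↑W + cnt i ↑(E.map Prod.snd)) % k = 0 := by
  intro j
  induction j with
  | zero =>
    intro u B _ hBlen hB
    refine ⟨B.map Prod.snd, [], ?_, ?_, ?_, ?_, ?_⟩
    · rw [List.forall₂_map_right_iff]
      rw [List.forall₂_same]
      intro p _
      exact ⟨le_refl _, by omega⟩
    · simp
    · simp
    · simpa using hBlen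
    · intro i hi; omega
  | succ j IH =>
    intro u B hBne hBlen hB
    have hkpos : 0 < k := by omega
    have hpow : (2:ℕ) ^ (j+1) = 2 ^ j + 2 ^ j := by rw [pow_succ]; ring
    have hpowpos : 0 < (2:ℕ) ^ j := Nat.pow_pos (by norm_num)
    set N := cnt j u with hN
    set C := N % k with hC
    set ρ := (k - C) % k with hρdef
    have hClt : C < k := Nat.mod_lt _ hkpos
    have hc1 : 1 ≤ B.length := List.length_pos_iff.mpr hBne
    -- weakened conditions at level j for slots coming from level j+1
    have hweak : ∀ p : ℕ × ℕ, p.2 % 2 ^ (j+1) = 0 → p.2 + 2 ^ (j+1) ≤ p.1 →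
        p.2 % 2 ^ j = 0 ∧ p.2 + 2 ^ j ≤ p.1 := by
      intro p h1 h2
      constructor
      · have hd : (2:ℕ) ^ j ∣ p.2 :=
          dvd_trans (pow_dvd_pow 2 (Nat.le_succ j)) (Nat.dvd_of_mod_eq_zero h1)
        exact Nat.mod_eq_zero_of_dvd hd
      · omega
    by_cases hcase : ρ ≤ B.length
    · -- Case 1: enough existing slots; set bit j on the first ρ slots
      set B' := (B.take ρ).map (fun p => (p.1, p.2 + 2 ^ j)) ++ B.drop ρ with hB'def
      have hlenB' : B'.length = B.length := by
        simp [hB'def, List.length_take]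
        omega
      have hbase' : ∀ p ∈ B', p.2 % 2 ^ j = 0 ∧ p.2 + 2 ^ j ≤ p.1 := by
        intro p hp
        rcases List.mem_append.mp hp with h | h
        · obtain ⟨q, hq, rfl⟩ := List.mem_map.mp h
          obtain ⟨e1, e2⟩ := hB q (List.take_subset _ _ hq)
          have h0 : q.2 % 2 ^ j = 0 := (hweak q e1 e2).1
          refine ⟨?_, ?_⟩
          · show (q.2 + 2 ^ j) % 2 ^ j = 0
            rw [Nat.add_mod, h0, Nat.mod_self]
            simp
          · show (q.2 + 2 ^ j) + 2 ^ j ≤ q.1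
            omega
        · exact hweak p (hB p (List.drop_subset _ _ h)).1 (hB p (List.drop_subset _ _ h)).2
      have hB'ne : B' ≠ [] := by
        intro h
        rw [h] at hlenB'
        simp at hlenB'
        omega
      obtain ⟨W, E, hf, hEle, hEprop, hlen, hcnts⟩ :=
        IH u B' hB'ne (by omega) hbase'
      have hn₁ : ((B.take ρ).map (fun p => (p.1, p.2 + 2 ^ j))).length = ρ := by
        simp [List.length_take]
        omega
      refine ⟨W, E, ?_, hEle, ?_, ?_, ?_⟩
      · -- Forall₂ for B at width j+1
        have h1 := List.forall₂_take ((B.take ρ).map (fun p => (p.1, p.2 + 2 ^ j))).length hf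
        rw [hB'def, List.take_left] at h1
        have h2 := List.forall₂_drop ((B.take ρ).map (fun p => (p.1, p.2 + 2 ^ j))).length hf
        rw [hB'def, List.drop_left] at h2
        rw [List.forall₂_map_left_iff] at h1
        have h1' : List.Forall₂ (fun (p : ℕ × ℕ) w => p.2 ≤ w ∧ w < p.2 + 2 ^ (j+1))
            (B.take ρ) (W.take ((B.take ρ).map (fun p => (p.1, p.2 + 2 ^ j))).length) :=
          h1.imp (fun p w hw => ⟨by have := hw.1; omega, by have := hw.2; omega⟩)
        have h2' : List.Forall₂ (fun (p : ℕ × ℕ) w => p.2 ≤ w ∧ w < p.2 + 2 ^ (j+1))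
            (B.drop ρ) (W.drop ((B.take ρ).map (fun p => (p.1, p.2 + 2 ^ j))).length) :=
          h2.imp (fun p w hw => ⟨by have := hw.1; omega, by have := hw.2; omega⟩)
        have h3 := forall₂_append' h1' h2'
        rw [hn₁] at h3
        rwa [List.take_append_drop, List.take_append_drop] at h3
      · intro p hp
        exact ⟨(hEprop p hp).1, by
          rw [div_pow_succ, div_pow_succ, (hEprop p hp).2]⟩
      · omega
      · intro i hi
        rcases Nat.lt_succ_iff_lt_or_eq.mp hi with hij | rfl
        · exact hcnts i hij
        · -- i = j
          have hxle : cnt i ↑(E.map Prod.fst) ≤ N := cnt_le i hEle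
          have hWj : cnt i ↑W = ρ := by
            have hcongr : cnt i ↑(B'.map Prod.snd) = cnt i ↑W := by
              apply cnt_congr
              rw [List.forall₂_map_left_iff]
              exact (slot_bits hf (fun p hp => (hbase' p hp).1)).imp
                (fun p w h => h i le_rfl)
            rw [← hcongr, hB'def, List.map_append, List.map_map, cnt_coe_append]
            have e1 : cnt i ↑(List.map (Prod.snd ∘ fun p : ℕ × ℕ => (p.1, p.2 + 2 ^ i)) (B.take ρ)) = ρ := by
              rw [cnt_eq_length]
              · simp [List.length_take]; omega
              · intro a ha
                obtain ⟨q, hq, rfl⟩ := List.mem_map.mp ha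
                obtain ⟨e1, _⟩ := hB q (List.take_subset _ _ hq)
                show Nat.testBit (q.2 + 2 ^ i) i = true
                rw [rep_of_mod e1]
                exact testBit_base' i _
            have e2 : cnt i ↑(List.map Prod.snd (B.drop ρ)) = 0 := by
              rw [cnt_eq_zero]
              intro a ha
              obtain ⟨q, hq, rfl⟩ := List.mem_map.mp ha
              obtain ⟨e1, _⟩ := hB q (List.drop_subset _ _ hq)
              show Nat.testBit q.2 i = false
              rw [rep_of_mod e1]
              exact testBit_base i _
            rw [e1, e2]
            omega
          have hEsnd : cnt i ↑(E.map Prod.fst) = cnt i ↑(E.map Prod.snd) := by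
            apply cnt_congr
            apply forall₂_map_pairs (R := fun a b => Nat.testBit a i = Nat.testBit b i)
            intro p hp
            exact (testBit_eq_of_div_eq (hEprop p hp).2 i le_rfl).symm
          have hsub : cnt i (u - ↑(E.map Prod.fst)) = N - cnt i ↑(E.map Prod.fst) := by
            rw [cnt_sub i hEle]
          rw [hsub, hWj, ← hEsnd,
            show N - cnt i ↑(E.map Prod.fst) + ρ + cnt i ↑(E.map Prod.fst) = N + ρ from by omega,
            hρdef, hC]
          exact add_resid hkpos
    · -- Case 2: select C additional piles with bit j set
      push_neg at hcase
      have hCpos : 0 < C := by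
        rcases Nat.eq_zero_or_pos C with h | h
        · rw [h, Nat.sub_zero, Nat.mod_self] at hρdef
          omega
        · exact h
      have hρval : ρ = k - C := by
        rw [hρdef]
        exact Nat.mod_eq_of_lt (by omega)
      have hsum : B.length + C ≤ k - 1 := by omega
      have hCN : C ≤ N := Nat.mod_le N k
      set l₀ := ((u.filter (fun a => Nat.testBit a j)).toList).take C with hl₀def
      have hlenl₀ : l₀.length = C := by
        rw [hl₀def, List.length_take, Multiset.length_toList]
        exact min_eq_left hCN
      have hl₀u : (↑l₀ : Multiset ℕ) ≤ u := by
        refine le_trans (Multiset.coe_le.mpr ((List.take_sublist _ _).subperm)) ?_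
        rw [Multiset.coe_toList]
        exact Multiset.filter_le _ u
      have hl₀bit : ∀ a ∈ l₀, Nat.testBit a j = true := by
        intro a ha
        have h1 : a ∈ (u.filter (fun a => Nat.testBit a j)).toList :=
          List.take_subset _ _ ha
        rw [Multiset.mem_toList] at h1
        exact (Multiset.mem_filter.mp h1).2
      set newB := l₀.map (fun a => (a, 2 ^ (j+1) * (a / 2 ^ (j+1)))) with hnewBdef
      have hlennewB : newB.length = C := by rw [hnewBdef, List.length_map, hlenl₀]
      have hB''cond : ∀ p ∈ B ++ newB, p.2 % 2 ^ j = 0 ∧ p.2 + 2 ^ j ≤ p.1 := by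
        intro p hp
        rcases List.mem_append.mp hp with h | h
        · exact hweak p (hB p h).1 (hB p h).2
        · obtain ⟨a, ha, rfl⟩ := List.mem_map.mp h
          constructor
          · show 2 ^ (j+1) * (a / 2 ^ (j+1)) % 2 ^ j = 0
            rw [show (2:ℕ) ^ (j+1) * (a / 2 ^ (j+1)) = 2 ^ j * (2 * (a / 2 ^ (j+1))) from by
              rw [hpow]; ring]
            exact Nat.mul_mod_right _ _
          · exact low_ge_of_testBit (hl₀bit a ha)
      have hB''len : (B ++ newB).length = B.length + C := by
        rw [List.length_append, hlennewB]
      obtain ⟨W'', E'', hf'', hE''le, hE''prop, hlen'', hcnt''⟩ :=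
        IH (u - ↑l₀) (B ++ newB) (by
          intro h
          have := congrArg List.length h
          rw [hB''len] at this
          simp at this
          omega) (by omega) hB''cond
      -- split W''
      have hfB : List.Forall₂ (fun p w => p.2 ≤ w ∧ w < p.2 + 2 ^ j) B (W''.take B.length) := by
        have := List.forall₂_take B.length hf''
        rwa [List.take_left] at this
      have hfnew : List.Forall₂ (fun p w => p.2 ≤ w ∧ w < p.2 + 2 ^ j) newB (W''.drop B.length) := by
        have := List.forall₂_drop B.length hf''
        rwa [List.drop_left] at this
      set W₂ := W''.drop B.length with hW₂def
      have hlenW₂ : W₂.length = C := by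
        have := hfnew.length_eq
        rw [hlennewB] at this
        rw [hW₂def, ← this]
      have hfnew' : List.Forall₂
          (fun a w => 2 ^ (j+1) * (a / 2 ^ (j+1)) ≤ w ∧ w < 2 ^ (j+1) * (a / 2 ^ (j+1)) + 2 ^ j)
          l₀ W₂ := by
        have := hfnew
        rw [hnewBdef, List.forall₂_map_left_iff] at this
        exact this
      have hzip : ∀ q ∈ l₀.zip W₂, 2 ^ (j+1) * (q.1 / 2 ^ (j+1)) ≤ q.2 ∧
          q.2 < 2 ^ (j+1) * (q.1 / 2 ^ (j+1)) + 2 ^ j := by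
        intro q hq
        have := List.forall₂_zip hfnew' (a := q.1) (b := q.2)
        exact this (by simpa using hq)
      refine ⟨W''.take B.length, l₀.zip W₂ ++ E'', ?_, ?_, ?_, ?_, ?_⟩
      · exact hfB.imp (fun p w hw => ⟨hw.1, by have := hw.2; omega⟩)
      · rw [List.map_append, List.map_fst_zip (le_of_eq (by rw [hlenl₀, hlenW₂]))]
        rw [show ((↑(l₀ ++ E''.map Prod.fst) : Multiset ℕ)) = ↑l₀ + ↑(E''.map Prod.fst) from rfl]
        have h1 : ↑l₀ + ↑(E''.map Prod.fst) ≤ ↑l₀ + (u - ↑l₀) := add_le_add_right hE''le _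
        rwa [add_tsub_cancel_of_le hl₀u] at h1
      · intro p hp
        rcases List.mem_append.mp hp with h | h
        · obtain ⟨h1, h2⟩ := hzip p h
          have ha : p.1 ∈ l₀ := (List.of_mem_zip h).1
          have hlow := low_ge_of_testBit (hl₀bit p.1 ha)
          constructor
          · omega
          · have hc : 2 ^ (j+1) * (p.1 / 2 ^ (j+1)) = p.1 / 2 ^ (j+1) * 2 ^ (j+1) :=
              mul_comm _ _
            refine Nat.div_eq_of_lt_le (by omega) ?_
            have : (p.1 / 2 ^ (j+1) + 1) * 2 ^ (j+1) = p.1 / 2 ^ (j+1) * 2 ^ (j+1) + 2 ^ (j+1) := by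
              ring
            omega
        · obtain ⟨h1, h2⟩ := hE''prop p h
          exact ⟨h1, by rw [div_pow_succ, div_pow_succ, h2]⟩
      · rw [List.length_append, List.length_zip, hlenl₀, hlenW₂]
        simp only [min_self]
        rw [hB''len] at hlen''
        omega
      · intro i hi
        have hmapfst : (List.map Prod.fst (l₀.zip W₂ ++ E'')) = l₀ ++ E''.map Prod.fst := by
          rw [List.map_append, List.map_fst_zip (le_of_eq (by rw [hlenl₀, hlenW₂]))]
        have hmapsnd : (List.map Prod.snd (l₀.zip W₂ ++ E'')) = W₂ ++ E''.map Prod.snd := by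
          rw [List.map_append, List.map_snd_zip (le_of_eq (by rw [hlenl₀, hlenW₂]))]
        have hsubeq : u - ↑(List.map Prod.fst (l₀.zip W₂ ++ E'')) =
            u - ↑l₀ - ↑(E''.map Prod.fst) := by
          rw [hmapfst, show ((↑(l₀ ++ E''.map Prod.fst) : Multiset ℕ)) = ↑l₀ + ↑(E''.map Prod.fst) from rfl,
            tsub_add_eq_tsub_tsub]
        have hWsplit : cnt i ↑W'' = cnt i ↑(W''.take B.length) + cnt i ↑W₂ := by
          rw [hW₂def, ← cnt_coe_append, List.take_append_drop]
        have hsndeq : cnt i ↑(List.map Prod.snd (l₀.zip W₂ ++ E'')) =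
            cnt i ↑W₂ + cnt i ↑(E''.map Prod.snd) := by
          rw [hmapsnd, cnt_coe_append]
        rcases Nat.lt_succ_iff_lt_or_eq.mp hi with hij | rfl
        · have h1 := hcnt'' i hij
          rw [hsubeq, hsndeq,
            show cnt i (u - ↑l₀ - ↑(E''.map Prod.fst)) + cnt i ↑(W''.take B.length) +
              (cnt i ↑W₂ + cnt i ↑(E''.map Prod.snd)) =
              cnt i (u - ↑l₀ - ↑(E''.map Prod.fst)) + cnt i ↑W'' + cnt i ↑(E''.map Prod.snd) from by
                rw [hWsplit]; ring]
          exact h1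
        · -- i = j case
          have hl₀cnt : cnt i ↑l₀ = C := by
            rw [cnt_eq_length i hl₀bit, hlenl₀]
          have hW''0 : ∀ w ∈ W'', Nat.testBit w i = false := by
            intro w hw
            obtain ⟨p, hp, hpw⟩ := forall₂_mem_right hf'' w hw
            have hbase := hB''cond p hp
            have hdiv := div_eq_of_slot hbase.1 hpw.1 hpw.2
            have hbit := (testBit_eq_of_div_eq hdiv i le_rfl)
            rw [hbit]
            rcases List.mem_append.mp hp with h | h
            · rw [rep_of_mod (hB p h).1]
              exact testBit_base i _
            · obtain ⟨a, ha, rfl⟩ := List.mem_map.mp h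
              exact testBit_base i _
          have hW10 : cnt i ↑(W''.take B.length) = 0 :=
            cnt_eq_zero i (fun w hw => hW''0 w (List.take_subset _ _ hw))
          have hW20 : cnt i ↑W₂ = 0 :=
            cnt_eq_zero i (fun w hw => hW''0 w (List.drop_subset _ _ hw))
          have hE''snd : cnt i ↑(E''.map Prod.fst) = cnt i ↑(E''.map Prod.snd) := by
            apply cnt_congr
            apply forall₂_map_pairs (R := fun a b => Nat.testBit a i = Nat.testBit b i)
            intro p hp
            exact (testBit_eq_of_div_eq (hE''prop p hp).2 i le_rfl).symm
          have hsub1 : cnt i (u - ↑l₀) = N - C := by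
            rw [cnt_sub i hl₀u, hl₀cnt]
          have hxle : cnt i ↑(E''.map Prod.fst) ≤ N - C := by
            have := cnt_le i hE''le
            rwa [hsub1] at this
          have hsub2 : cnt i (u - ↑l₀ - ↑(E''.map Prod.fst)) =
              N - C - cnt i ↑(E''.map Prod.fst) := by
            rw [cnt_sub i hE''le, hsub1]
          rw [hsubeq, hsndeq, hsub2, hW10, hW20, ← hE''snd,
            show N - C - cnt i ↑(E''.map Prod.fst) + 0 + (0 + cnt i ↑(E''.map Prod.fst)) =
              N - C from by omega, hC]
          exact sub_mod_self

lemma forall₂_imp_mem {α β : Type*} {R S : α → β → Prop} {l₁ : List α} {l₂ : List β}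
    (h : List.Forall₂ R l₁ l₂) (him : ∀ a ∈ l₁, ∀ b ∈ l₂, R a b → S a b) :
    List.Forall₂ S l₁ l₂ := by
  induction h with
  | nil => constructor
  | cons hab hr ih =>
    exact List.Forall₂.cons (him _ (by simp) _ (by simp) hab)
      (ih (fun a ha b hb hr => him a (by simp [ha]) b (by simp [hb]) hr))

/-- Lemma B: from a position with some bad bit-count, there is a move to a
position with all bit-counts divisible by `k`. -/
lemma lemB {k : ℕ} (hk : 2 ≤ k) {s : Multiset ℕ} (hbad : ¬ ∀ i, cnt i s % k = 0) :
    ∃ t, MooreMove k s t ∧ ∀ i, cnt i t % k = 0 := by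
  push_neg at hbad
  obtain ⟨i₀, hi₀⟩ := hbad
  have hkpos : 0 < k := by omega
  set M := s.sum with hM
  have hhigh : ∀ i, M ≤ i → cnt i s = 0 := by
    intro i hMi
    rw [cnt, Multiset.card_eq_zero, Multiset.filter_eq_nil]
    intro a ha
    have h1 : a ≤ M := Multiset.single_le_sum (fun x _ => Nat.zero_le x) a ha
    have h2 : a < 2 ^ i := lt_of_le_of_lt (le_trans h1 hMi) (Nat.lt_two_pow_self)
    simp [Nat.testBit_lt_two_pow h2]
  have hi₀M : i₀ ≤ M := by
    by_contra h
    rw [hhigh i₀ (by omega)] at hi₀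
    simp at hi₀
  set j := Nat.findGreatest (fun i => cnt i s % k ≠ 0) M with hjdef
  have hj : cnt j s % k ≠ 0 := by
    have h := Nat.findGreatest_spec (P := fun i => cnt i s % k ≠ 0) hi₀M hi₀
    simpa using h
  have hmax : ∀ i, j < i → cnt i s % k = 0 := by
    intro i hji
    by_cases hiM : i ≤ M
    · by_contra h
      exact Nat.findGreatest_is_greatest (P := fun i => cnt i s % k ≠ 0) hji hiM h
    · rw [hhigh i (by omega)]
      simp
  set N := cnt j s with hN
  set C := N % k with hC
  have hCpos : 0 < C := Nat.pos_of_ne_zero hj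
  have hClt : C < k := Nat.mod_lt _ hkpos
  have hCN : C ≤ N := Nat.mod_le N k
  set l₀ := ((s.filter (fun a => Nat.testBit a j)).toList).take C with hl₀def
  have hlenl₀ : l₀.length = C := by
    rw [hl₀def, List.length_take, Multiset.length_toList]
    exact min_eq_left hCN
  have hl₀s : (↑l₀ : Multiset ℕ) ≤ s := by
    refine le_trans (Multiset.coe_le.mpr ((List.take_sublist _ _).subperm)) ?_
    rw [Multiset.coe_toList]
    exact Multiset.filter_le _ s
  have hl₀bit : ∀ a ∈ l₀, Nat.testBit a j = true := by
    intro a ha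
    have h1 : a ∈ (s.filter (fun a => Nat.testBit a j)).toList := List.take_subset _ _ ha
    rw [Multiset.mem_toList] at h1
    exact (Multiset.mem_filter.mp h1).2
  set B := l₀.map (fun a => (a, 2 ^ (j+1) * (a / 2 ^ (j+1)))) with hBdef
  have hpow : (2:ℕ) ^ (j+1) = 2 ^ j + 2 ^ j := by rw [pow_succ]; ring
  have hBcond : ∀ p ∈ B, p.2 % 2 ^ j = 0 ∧ p.2 + 2 ^ j ≤ p.1 := by
    intro p hp
    obtain ⟨a, ha, rfl⟩ := List.mem_map.mp hp
    constructor
    · show 2 ^ (j+1) * (a / 2 ^ (j+1)) % 2 ^ j = 0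
      rw [show (2:ℕ) ^ (j+1) * (a / 2 ^ (j+1)) = 2 ^ j * (2 * (a / 2 ^ (j+1))) from by
        rw [hpow]; ring]
      exact Nat.mul_mod_right _ _
    · exact low_ge_of_testBit (hl₀bit a ha)
  have hBlen : B.length = C := by rw [hBdef, List.length_map, hlenl₀]
  obtain ⟨W, E, hf, hEle, hEprop, hlen, hcnts⟩ :=
    keyP hk j (s - ↑l₀) B
      (by intro h; rw [h] at hBlen; simp at hBlen; omega)
      (by omega) hBcond
  have hfl : List.Forall₂
      (fun a w => 2 ^ (j+1) * (a / 2 ^ (j+1)) ≤ w ∧ w < 2 ^ (j+1) * (a / 2 ^ (j+1)) + 2 ^ j)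
      l₀ W := by
    have := hf
    rw [hBdef, List.forall₂_map_left_iff] at this
    exact this
  have hl₀W : List.Forall₂ (fun a b => b < a) l₀ W :=
    forall₂_imp_mem hfl (fun a ha w _ hw => by
      have := low_ge_of_testBit (hl₀bit a ha)
      omega)
  have hl₀Wdiv : List.Forall₂ (fun a w => w / 2 ^ (j+1) = a / 2 ^ (j+1)) l₀ W :=
    forall₂_imp_mem hfl (fun a ha w _ hw => by
      have hc : 2 ^ (j+1) * (a / 2 ^ (j+1)) = a / 2 ^ (j+1) * 2 ^ (j+1) := mul_comm _ _
      refine Nat.div_eq_of_lt_le (by omega) ?_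
      have : (a / 2 ^ (j+1) + 1) * 2 ^ (j+1) = a / 2 ^ (j+1) * 2 ^ (j+1) + 2 ^ (j+1) := by ring
      omega)
  refine ⟨s - (↑l₀ + ↑(E.map Prod.fst)) + (↑W + ↑(E.map Prod.snd)), ⟨↑l₀ + ↑(E.map Prod.fst),
    ↑W + ↑(E.map Prod.snd), ?_, ?_, ?_, ?_, rfl⟩, ?_⟩
  · have h1 : ↑l₀ + ↑(E.map Prod.fst) ≤ ↑l₀ + (s - ↑l₀) := add_le_add_right hEle _
    rwa [add_tsub_cancel_of_le hl₀s] at h1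
  · intro h
    have := congrArg Multiset.card h
    simp [hlenl₀] at this
    omega
  · simp only [Multiset.card_add, Multiset.coe_card, hlenl₀, List.length_map]
    omega
  · exact Multiset.Rel.add (rel_of_forall₂ hl₀W)
      (rel_of_forall₂ (forall₂_map_pairs (fun p hp => (hEprop p hp).1)))
  · intro i
    have hsubeq : s - (↑l₀ + ↑(E.map Prod.fst)) = s - ↑l₀ - ↑(E.map Prod.fst) :=
      tsub_add_eq_tsub_tsub _ _ _
    rw [cnt_add, hsubeq, cnt_add]
    have hEsnd : ∀ i', j ≤ i' → cnt i' ↑(E.map Prod.fst) = cnt i' ↑(E.map Prod.snd) := by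
      intro i' hi'
      apply cnt_congr
      apply forall₂_map_pairs (R := fun a b => Nat.testBit a i' = Nat.testBit b i')
      intro p hp
      exact (testBit_eq_of_div_eq (hEprop p hp).2 i' hi').symm
    rcases Nat.lt_trichotomy i j with hij | rfl | hij
    · have h1 := hcnts i hij
      rw [show cnt i (s - ↑l₀ - ↑(E.map Prod.fst)) + (cnt i ↑W + cnt i ↑(E.map Prod.snd)) =
        cnt i (s - ↑l₀ - ↑(E.map Prod.fst)) + cnt i ↑W + cnt i ↑(E.map Prod.snd) from by ring]
      exact h1
    · -- i = j
      have hl₀cnt : cnt j ↑l₀ = C := by rw [cnt_eq_length j hl₀bit, hlenl₀]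
      have hW0 : cnt j ↑W = 0 := by
        apply cnt_eq_zero
        intro w hw
        obtain ⟨p, hp, hpw⟩ := forall₂_mem_right hf w hw
        have hbase := hBcond p hp
        rw [(testBit_eq_of_div_eq (div_eq_of_slot hbase.1 hpw.1 hpw.2) j le_rfl)]
        obtain ⟨a, ha, rfl⟩ := List.mem_map.mp hp
        exact testBit_base j _
      have hsub1 : cnt j (s - ↑l₀) = N - C := by rw [cnt_sub j hl₀s, hl₀cnt]
      have hxle : cnt j ↑(E.map Prod.fst) ≤ N - C := by
        have := cnt_le j hEle
        rwa [hsub1] at this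
      rw [cnt_sub j hEle, hsub1, hW0, ← hEsnd j le_rfl,
        show N - C - cnt j ↑(E.map Prod.fst) + (0 + cnt j ↑(E.map Prod.fst)) = N - C from by omega,
        hC]
      exact sub_mod_self
    · -- i > j
      have hWcnt : cnt i ↑l₀ = cnt i ↑W := by
        apply cnt_congr
        exact hl₀Wdiv.imp (fun a w h =>
          (testBit_eq_of_div_eq h i (by omega)).symm)
      have hl₀le : cnt i ↑l₀ ≤ cnt i s := cnt_le i hl₀s
      have hxle : cnt i ↑(E.map Prod.fst) ≤ cnt i (s - ↑l₀) := cnt_le i hEle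
      rw [cnt_sub i hl₀s] at hxle
      rw [cnt_sub i hEle, cnt_sub i hl₀s, ← hEsnd i (by omega), ← hWcnt,
        show cnt i s - cnt i ↑l₀ - cnt i ↑(E.map Prod.fst) +
          (cnt i ↑l₀ + cnt i ↑(E.map Prod.fst)) = cnt i s from by omega]
      exact hmax i hij


/-- Moore's theorem: for `k ≥ 2`, a position of Moore's Nim_k is a P-position
iff for every bit position `i`, the number of piles whose `i`-th binary digit
is `1` is divisible by `k`. -/
theorem stmt7 (k : ℕ) (hk : 2 ≤ k) (s : Multiset ℕ) :
    MooreP k s ↔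
      ∀ i : ℕ, Multiset.card (s.filter (fun a => Nat.testBit a i)) % k = 0 := by
  have main : ∀ n (s : Multiset ℕ), s.sum = n → (MooreP k s ↔ ∀ i, cnt i s % k = 0) := by
    intro n
    induction n using Nat.strong_induction_on with
    | _ n IH =>
      intro s hs
      constructor
      · intro hP
        by_contra hbad
        obtain ⟨t, hmv, hgood⟩ := lemB hk hbad
        cases hP with
        | mk _ h =>
          have hNt := h t hmv
          cases hNt with
          | mk _ u hmv' hPu =>
            have hbadu := lemA hk hgood hmv'
            have hsumt : t.sum < n := hs ▸ move_sum_lt hmv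
            have hsumu : u.sum < n := lt_trans (move_sum_lt hmv') hsumt
            exact hbadu ((IH u.sum hsumu u rfl).mp hPu)
      · intro hgood
        constructor
        intro t hmv
        have hbadt := lemA hk hgood hmv
        obtain ⟨v, hmv', hgoodv⟩ := lemB hk hbadt
        have hsumv : v.sum < n := by
          have h1 := move_sum_lt hmv
          have h2 := move_sum_lt hmv'
          omega
        exact MooreN.mk t v hmv' ((IH v.sum hsumv v rfl).mpr hgoodv)
  exact main s.sum s rfl
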